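/- With the notation of the previous statement, the map Z ↦ ‖Σ̂^{(N)}(Z)‖^{1/2} from ℝ^{N×n} (Euclidean norm) to ℝ is Lipschitz with constant ‖Σ^{(N)}‖^{1/2}/√n. -/

import Mathlib

private lemma aux_quad {E : Type*} [NormedAddCommGroup E] [NormedSpace ℝ E]
    (T : (E →L[ℝ] ℝ) →L[ℝ] E) (u : E →L[ℝ] ℝ) : u (T u) ≤ ‖T‖ * ‖u‖ ^ 2 := by
  calc u (T u) ≤ ‖u (T u)‖ := le_abs_self _
    _ ≤ ‖u‖ * ‖T u‖ := u.le_opNorm _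
    _ ≤ ‖u‖ * (‖T‖ * ‖u‖) := by gcongr; exact T.le_opNorm u
    _ = ‖T‖ * ‖u‖ ^ 2 := by ring

private lemma aux_sumA {E : Type*} [NormedAddCommGroup E] [NormedSpace ℝ E]
    {n : ℕ} (hn : 0 < n) (T : (E →L[ℝ] ℝ) →L[ℝ] E) (Y : Fin n → E) (u : E →L[ℝ] ℝ)
    (hTu : T u = (n : ℝ)⁻¹ • ∑ k, u (Y k) • Y k) :
    ∑ k, (u (Y k)) ^ 2 ≤ n * ‖T‖ * ‖u‖ ^ 2 := by
  have hn' : (0:ℝ) < n := by exact_mod_cast hn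
  have h : u (T u) = (n : ℝ)⁻¹ * ∑ k, (u (Y k)) ^ 2 := by
    rw [hTu]; simp [map_sum, map_smul, smul_eq_mul, sq]
  have h2 := aux_quad T u
  have h3 : (∑ k, (u (Y k)) ^ 2) = n * u (T u) := by
    rw [h]; field_simp
  rw [h3, mul_assoc]
  exact mul_le_mul_of_nonneg_left h2 hn'.le

private lemma aux_sumB {E : Type*} [NormedAddCommGroup E] [NormedSpace ℝ E]
    {N n : ℕ} (x : Fin N → E) (S : (E →L[ℝ] ℝ) →L[ℝ] E)
    (hS : ∀ u, S u = ∑ j, u (x j) • x j)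
    (u : E →L[ℝ] ℝ) (W : EuclideanSpace ℝ (Fin N × Fin n)) :
    ∑ k : Fin n, (u (∑ j, W (j, k) • x j)) ^ 2 ≤ ‖S‖ * ‖u‖ ^ 2 * ‖W‖ ^ 2 := by
  have hc : ∑ j, (u (x j)) ^ 2 ≤ ‖S‖ * ‖u‖ ^ 2 := by
    have h : u (S u) = ∑ j, (u (x j)) ^ 2 := by rw [hS]; simp [map_sum, map_smul, smul_eq_mul, sq]
    rw [← h]; exact aux_quad S u
  have hW : ‖W‖ ^ 2 = ∑ k : Fin n, ∑ j : Fin N, (W (j, k)) ^ 2 := by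
    rw [EuclideanSpace.norm_eq, Real.sq_sqrt (by positivity)]
    rw [Fintype.sum_prod_type, Finset.sum_comm]
    simp [Real.norm_eq_abs, sq_abs]
  calc ∑ k : Fin n, (u (∑ j, W (j, k) • x j)) ^ 2
      ≤ ∑ k : Fin n, (∑ j, (W (j, k)) ^ 2) * ∑ j, (u (x j)) ^ 2 := by
        apply Finset.sum_le_sum; intro k _
        have h : u (∑ j, W (j, k) • x j) = ∑ j, W (j, k) * u (x j) := by
          simp [map_sum, map_smul, smul_eq_mul]
        rw [h]; exact Finset.sum_mul_sq_le_sq_mul_sq _ _ _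
    _ = (∑ k : Fin n, ∑ j, (W (j, k)) ^ 2) * (∑ j, (u (x j)) ^ 2) := by rw [← Finset.sum_mul]
    _ ≤ (∑ k : Fin n, ∑ j, (W (j, k)) ^ 2) * (‖S‖ * ‖u‖ ^ 2) := by
        apply mul_le_mul_of_nonneg_left hc (by positivity)
    _ = ‖S‖ * ‖u‖ ^ 2 * ‖W‖ ^ 2 := by rw [hW]; ring

private lemma aux_key {E : Type*} [NormedAddCommGroup E] [NormedSpace ℝ E]
    (N n : ℕ) (hn : 0 < n) (x : Fin N → E)
    (S : (E →L[ℝ] ℝ) →L[ℝ] E)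
    (hS : ∀ u, S u = ∑ j, u (x j) • x j)
    (Shat : EuclideanSpace ℝ (Fin N × Fin n) → ((E →L[ℝ] ℝ) →L[ℝ] E))
    (hShat : ∀ Z u, Shat Z u =
      (n : ℝ)⁻¹ • ∑ km : Fin n,
        u (∑ j : Fin N, Z (j, km) • x j) • (∑ j : Fin N, Z (j, km) • x j))
    (Z Z' : EuclideanSpace ℝ (Fin N × Fin n)) :
    Real.sqrt ‖Shat Z‖ ≤ Real.sqrt ‖Shat Z'‖ + Real.sqrt ‖S‖ / Real.sqrt n * ‖Z - Z'‖ := by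
  have hn' : (0:ℝ) < n := by exact_mod_cast hn
  set t := Real.sqrt ‖Shat Z‖ with ht
  set C := Real.sqrt ‖Shat Z'‖ + Real.sqrt ‖S‖ / Real.sqrt n * ‖Z - Z'‖ with hCdef
  have hC : 0 ≤ C := by positivity
  have ht0 : 0 ≤ t := Real.sqrt_nonneg _
  have hmain : ‖Shat Z‖ ≤ C * t := by
    apply ContinuousLinearMap.opNorm_le_bound _ (by positivity)
    intro u
    apply NormedSpace.norm_le_dual_bound ℝ _ (by positivity)
    intro v
    set A : EuclideanSpace ℝ (Fin n) := WithLp.toLp 2 (fun k => u (∑ j : Fin N, Z (j, k) • x j)) with hA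
    set A' : EuclideanSpace ℝ (Fin n) := WithLp.toLp 2 (fun k => u (∑ j : Fin N, Z' (j, k) • x j)) with hA'
    set B : EuclideanSpace ℝ (Fin n) := WithLp.toLp 2 (fun k => v (∑ j : Fin N, Z (j, k) • x j)) with hB
    have hv : v (Shat Z u) = (n : ℝ)⁻¹ * ∑ k, A k * B k := by
      rw [hShat]; simp [hA, hB, map_sum, map_smul, smul_eq_mul, Finset.mul_sum]
    have hCS : |∑ k, A k * B k| ≤ ‖A‖ * ‖B‖ := by
      have h := abs_real_inner_le_norm B A
      simpa [PiLp.inner_apply, RCLike.inner_apply, conj_trivial, mul_comm ‖B‖ ‖A‖] using h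
    have hnormA : ‖A‖ ≤ Real.sqrt n * Real.sqrt ‖Shat Z'‖ * ‖u‖ + Real.sqrt ‖S‖ * ‖u‖ * ‖Z - Z'‖ := by
      have htri : ‖A‖ ≤ ‖A'‖ + ‖A - A'‖ := by
        have h := norm_add_le A' (A - A')
        simpa using h
      have hA'bd : ‖A'‖ ≤ Real.sqrt n * Real.sqrt ‖Shat Z'‖ * ‖u‖ := by
        have hsum : ∑ k, (u ((fun k => ∑ j : Fin N, Z' (j, k) • x j) k)) ^ 2
            ≤ n * ‖Shat Z'‖ * ‖u‖ ^ 2 :=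
          aux_sumA hn (Shat Z') _ u (hShat Z' u)
        rw [EuclideanSpace.norm_eq]
        simp only [Real.norm_eq_abs, sq_abs]
        calc Real.sqrt (∑ k, (A' k) ^ 2) ≤ Real.sqrt (n * ‖Shat Z'‖ * ‖u‖ ^ 2) :=
              Real.sqrt_le_sqrt (by simpa [hA'] using hsum)
          _ = Real.sqrt n * Real.sqrt ‖Shat Z'‖ * ‖u‖ := by
              rw [Real.sqrt_mul (by positivity), Real.sqrt_mul (by positivity),
                Real.sqrt_sq (norm_nonneg u)]
      have hAdbd : ‖A - A'‖ ≤ Real.sqrt ‖S‖ * ‖u‖ * ‖Z - Z'‖ := by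
        have hsub : ∀ k, (A - A') k = u (∑ j : Fin N, (Z - Z') (j, k) • x j) := by
          intro k
          simp [hA, hA', sub_smul, Finset.sum_sub_distrib, map_sub]
        have hsum := aux_sumB x S hS u (Z - Z')
        rw [EuclideanSpace.norm_eq]
        simp only [Real.norm_eq_abs, sq_abs]
        calc Real.sqrt (∑ k, ((A - A') k) ^ 2)
            ≤ Real.sqrt (‖S‖ * ‖u‖ ^ 2 * ‖Z - Z'‖ ^ 2) := by
              apply Real.sqrt_le_sqrt
              calc ∑ k, ((A - A') k) ^ 2 = ∑ k : Fin n, (u (∑ j : Fin N, (Z - Z') (j, k) • x j)) ^ 2 := by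
                    exact Finset.sum_congr rfl fun k _ => by rw [hsub k]
                _ ≤ ‖S‖ * ‖u‖ ^ 2 * ‖Z - Z'‖ ^ 2 := hsum
          _ = Real.sqrt ‖S‖ * ‖u‖ * ‖Z - Z'‖ := by
              rw [Real.sqrt_mul (by positivity), Real.sqrt_mul (by positivity),
                Real.sqrt_sq (norm_nonneg u), Real.sqrt_sq (norm_nonneg _)]
      linarith
    have hnormB : ‖B‖ ≤ Real.sqrt n * t * ‖v‖ := by
      have hsum : ∑ k, (v ((fun k => ∑ j : Fin N, Z (j, k) • x j) k)) ^ 2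
          ≤ n * ‖Shat Z‖ * ‖v‖ ^ 2 :=
        aux_sumA hn (Shat Z) _ v (hShat Z v)
      rw [EuclideanSpace.norm_eq]
      simp only [Real.norm_eq_abs, sq_abs]
      calc Real.sqrt (∑ k, (B k) ^ 2) ≤ Real.sqrt (n * ‖Shat Z‖ * ‖v‖ ^ 2) :=
            Real.sqrt_le_sqrt (by simpa [hB] using hsum)
        _ = Real.sqrt n * t * ‖v‖ := by
            rw [Real.sqrt_mul (by positivity), Real.sqrt_mul (by positivity),
              Real.sqrt_sq (norm_nonneg v), ht]
    have hns : Real.sqrt (n:ℝ) * Real.sqrt (n:ℝ) = (n:ℝ) := Real.mul_self_sqrt hn'.le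
    have hnsne : Real.sqrt (n:ℝ) ≠ 0 := by positivity
    calc ‖v (Shat Z u)‖ = (n : ℝ)⁻¹ * |∑ k, A k * B k| := by
          rw [hv, Real.norm_eq_abs, abs_mul, abs_inv, abs_of_nonneg hn'.le]
      _ ≤ (n : ℝ)⁻¹ * (‖A‖ * ‖B‖) := by
          apply mul_le_mul_of_nonneg_left hCS (by positivity)
      _ ≤ (n : ℝ)⁻¹ * ((Real.sqrt n * Real.sqrt ‖Shat Z'‖ * ‖u‖
            + Real.sqrt ‖S‖ * ‖u‖ * ‖Z - Z'‖) * (Real.sqrt n * t * ‖v‖)) := by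
          apply mul_le_mul_of_nonneg_left _ (by positivity)
          exact mul_le_mul hnormA hnormB (norm_nonneg B) (by positivity)
      _ = C * t * ‖u‖ * ‖v‖ := by
          rw [hCdef]
          have hinv : ((n:ℝ))⁻¹ = (Real.sqrt (n:ℝ) * Real.sqrt (n:ℝ))⁻¹ := by rw [hns]
          rw [hinv]
          field_simp
  nlinarith [Real.sq_sqrt (norm_nonneg (Shat Z))]

/-- The map `Z ↦ ‖Σ̂⁽ᴺ⁾(Z)‖^{1/2}` is Lipschitz on `ℝ^{N×n}` (Euclidean norm) with
constant `‖Σ⁽ᴺ⁾‖^{1/2}/√n`. -/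
theorem sample_covariance_sqrt_norm_lipschitz
    {E : Type*} [NormedAddCommGroup E] [NormedSpace ℝ E]
    (N n : ℕ) (hn : 0 < n) (x : Fin N → E)
    (S : (E →L[ℝ] ℝ) →L[ℝ] E)
    (hS : ∀ u, S u = ∑ j, u (x j) • x j)
    (Shat : EuclideanSpace ℝ (Fin N × Fin n) → ((E →L[ℝ] ℝ) →L[ℝ] E))
    (hShat : ∀ Z u, Shat Z u =
      (n : ℝ)⁻¹ • ∑ km : Fin n,
        u (∑ j : Fin N, Z (j, km) • x j) • (∑ j : Fin N, Z (j, km) • x j)) :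
    ∀ Z Z' : EuclideanSpace ℝ (Fin N × Fin n),
      |Real.sqrt ‖Shat Z‖ - Real.sqrt ‖Shat Z'‖|
        ≤ (Real.sqrt ‖S‖ / Real.sqrt n) * ‖Z - Z'‖ := by
  intro Z Z'
  have h1 := aux_key N n hn x S hS Shat hShat Z Z'
  have h2 := aux_key N n hn x S hS Shat hShat Z' Z
  rw [norm_sub_rev] at h2
  rw [abs_sub_le_iff]
  constructor <;> linarith
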